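/- Let o consist of a single min-plus operator family on ℚⁿ: o_i(x) = min_j (x_{j} + k_{ij}) over the out-neighbours j of i in a finite weighted digraph. Then there exists y ∈ (ℚ ∪ {+∞})ⁿ, not identically +∞, with y ≥ o(y) componentwise, if and only if the digraph contains a cycle of total weight ≤ 0. -/

import Mathlib

private lemma telescope13 (g : ℕ → ℚ) (c : ℕ → ℚ) (h : ∀ q, g (q + 1) + c q ≤ g q) (a : ℕ) :
    ∀ N, ∑ q ∈ Finset.range N, c (a + q) ≤ g a - g (a + N) := by
  intro N
  induction N with
  | zero => simp
  | succ N ih =>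
      rw [Finset.sum_range_succ]
      have := h (a + N)
      have : c (a + N) ≤ g (a + N) - g (a + N + 1) := by linarith
      calc ∑ q ∈ Finset.range N, c (a + q) + c (a + N)
          ≤ (g a - g (a + N)) + (g (a + N) - g (a + N + 1)) := by linarith
        _ = g a - g (a + (N + 1)) := by rw [show a + (N + 1) = a + N + 1 by omega]; ring

/-- For a purely min-plus system `o_i(y) = min_l (y_{j i l} + k i l)` on
`(ℚ ∪ {+∞})ⁿ`, a solution `y ≥ o(y)` not identically `+∞` exists iff the weighted
digraph contains a cycle of total weight `≤ 0`. -/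
theorem stmt13 (n : ℕ) (hn : 1 ≤ n) (m : Fin n → ℕ)
    (j : (i : Fin n) → Fin (m i + 1) → Fin n)
    (k : (i : Fin n) → Fin (m i + 1) → ℚ) :
    (∃ y : Fin n → WithTop ℚ, (¬ ∀ i, y i = ⊤) ∧ ∀ i,
        Finset.univ.inf' Finset.univ_nonempty
          (fun l => y (j i l) + ((k i l : ℚ) : WithTop ℚ)) ≤ y i) ↔
    (∃ (p : ℕ) (v : ℕ → Fin n) (l : (q : ℕ) → Fin (m (v q) + 1)),
        (∀ q ≤ p, j (v q) (l q) = v (q + 1)) ∧ v (p + 1) = v 0 ∧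
        ∑ q ∈ Finset.range (p + 1), k (v q) (l q) ≤ 0) := by
  constructor
  · rintro ⟨y, hnt, hy⟩
    -- pick a vertex with finite value
    push_neg at hnt
    obtain ⟨i0, hi0⟩ := hnt
    -- for each finite vertex, choose an edge achieving the min
    have hsel : ∀ i : Fin n, ∃ l : Fin (m i + 1), y i ≠ ⊤ →
        y (j i l) + ((k i l : ℚ) : WithTop ℚ) ≤ y i ∧ y (j i l) ≠ ⊤ := by
      intro i
      by_cases hi : y i = ⊤
      · exact ⟨0, fun h => absurd hi h⟩
      · have := hy i
        rw [Finset.inf'_le_iff] at this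
        obtain ⟨l, -, hl⟩ := this
        refine ⟨l, fun _ => ⟨hl, ?_⟩⟩
        intro htop
        rw [htop] at hl
        simp only [top_add, top_le_iff] at hl
        exact hi hl
    choose L hL using hsel
    -- build the infinite walk
    set v : ℕ → Fin n := fun q => Nat.rec i0 (fun _ w => j w (L w)) q with hv
    have hstep : ∀ q, v (q + 1) = j (v q) (L (v q)) := fun q => rfl
    have hfin : ∀ q, y (v q) ≠ ⊤ := by
      intro q
      induction q with
      | zero => exact hi0
      | succ q ih => rw [hstep]; exact (hL (v q) ih).2
    have hineq : ∀ q, y (v (q + 1)) + ((k (v q) (L (v q)) : ℚ) : WithTop ℚ) ≤ y (v q) := by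
      intro q
      rw [hstep]
      exact (hL (v q) (hfin q)).1
    -- finite rational values
    have hex : ∀ q, ∃ r : ℚ, (r : WithTop ℚ) = y (v q) :=
      fun q => WithTop.ne_top_iff_exists.mp (hfin q)
    choose g hg using hex
    have hgineq : ∀ q, g (q + 1) + k (v q) (L (v q)) ≤ g q := by
      intro q
      have := hineq q
      rw [← hg q, ← hg (q + 1)] at this
      exact_mod_cast this
    -- pigeonhole on Fin (n+1)
    have hcard : Fintype.card (Fin n) < Fintype.card (Fin (n + 1)) := by simp
    obtain ⟨a, b, hab, heq⟩ :=
      Fintype.exists_ne_map_eq_of_card_lt (fun q : Fin (n + 1) => v q) hcard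
    -- wlog a < b
    obtain ⟨a', b', hlt, heq'⟩ : ∃ a' b' : ℕ, a' < b' ∧ v a' = v b' := by
      rcases lt_or_gt_of_ne hab with h | h
      · exact ⟨a, b, by exact_mod_cast h, heq⟩
      · exact ⟨b, a, by exact_mod_cast h, heq.symm⟩
    set p := b' - a' - 1 with hp
    have hb' : a' + (p + 1) = b' := by omega
    refine ⟨p, fun q => v (a' + q), fun q => L (v (a' + q)), ?_, ?_, ?_⟩
    · intro q _
      show j (v (a' + q)) (L (v (a' + q))) = v (a' + (q + 1))
      rw [show a' + (q + 1) = (a' + q) + 1 by omega, hstep]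
    · show v (a' + (p + 1)) = v (a' + 0)
      rw [hb']
      simpa using heq'.symm
    · have htel := telescope13 g (fun q => k (v q) (L (v q))) hgineq a' (p + 1)
      have hgeq : g a' = g b' := by
        have : (g a' : WithTop ℚ) = (g b' : WithTop ℚ) := by rw [hg, hg, heq']
        exact_mod_cast this
      rw [hb', hgeq] at htel
      simpa using htel
  · rintro ⟨p, v, l, hedge, hcyc, hsum⟩
    set P : ℕ → ℚ := fun q => ∑ r ∈ Finset.range q, k (v r) (l r) with hP
    set y : Fin n → WithTop ℚ := fun i =>
      ((Finset.range (p + 1)).filter (fun q => v q = i)).inf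
        (fun q => ((-P q : ℚ) : WithTop ℚ)) with hy
    have hmem0 : (0 : ℕ) ∈ (Finset.range (p + 1)).filter (fun q => v q = v 0) := by
      simp
    have hy0 : y (v 0) ≤ ((-P 0 : ℚ) : WithTop ℚ) := Finset.inf_le hmem0
    refine ⟨y, ?_, ?_⟩
    · intro hall
      rw [hall (v 0)] at hy0
      exact absurd hy0 (by simp)
    · intro i
      by_cases hne : ((Finset.range (p + 1)).filter (fun q => v q = i)).Nonempty
      · obtain ⟨q, hq, hinf⟩ := Finset.exists_mem_eq_inf _ hne
          (fun q => ((-P q : ℚ) : WithTop ℚ))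
        simp only [Finset.mem_filter, Finset.mem_range] at hq
        obtain ⟨hqp, hqv⟩ := hq
        have hqle : q ≤ p := by omega
        -- use the edge l q
        subst hqv
        refine le_trans (Finset.inf'_le _ (Finset.mem_univ (l q))) ?_
        rw [hedge q hqle]
        have hy1 : y (v (q + 1)) ≤ ((-P (q + 1) : ℚ) : WithTop ℚ) := by
          rcases lt_or_eq_of_le hqle with h | h
          · have : q + 1 ∈ (Finset.range (p + 1)).filter (fun r => v r = v (q + 1)) := by
              simp; omega
            exact Finset.inf_le this
          · subst h
            rw [hcyc]
            refine le_trans hy0 ?_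
            have : -P 0 ≤ -P (q + 1) := by
              simp only [hP, Finset.range_zero, Finset.sum_empty, neg_zero]
              have : P (q + 1) ≤ 0 := hsum
              linarith
            exact_mod_cast this
        have hPrec : -P (q + 1) + k (v q) (l q) = -P q := by
          simp only [hP, Finset.sum_range_succ]; ring
        calc y (v (q + 1)) + ((k (v q) (l q) : ℚ) : WithTop ℚ)
            ≤ ((-P (q + 1) : ℚ) : WithTop ℚ) + ((k (v q) (l q) : ℚ) : WithTop ℚ) :=
              add_le_add hy1 le_rfl
          _ = ((-P q : ℚ) : WithTop ℚ) := by rw [← WithTop.coe_add, hPrec]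
          _ = y (v q) := hinf.symm
      · have : y i = ⊤ := by
          rw [hy]
          simp only [Finset.not_nonempty_iff_eq_empty.mp hne, Finset.inf_empty]
        rw [this]
        exact le_top
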